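/- Let G be a simple graph on vertex set [n] that does not contain the ordered graph G_0 = ({1,3},{1,5},{2,4},{2,6}) (i.e., there are no six vertices v_1 < v_2 < ... < v_6 with {v_1,v_3}, {v_1,v_5}, {v_2,v_4}, {v_2,v_6} all edges of G). Form the sequence v = I_1 I_2 ... I_n over alphabet [n], where I_i is the decreasing ordering of the set {j : {j,i} ∈ E(G), j < i}. Then v contains no subsequence of the form a b a b a b a b with a ≠ b (an 8-term alternation). -/

import Mathlib

private lemma strictMono_vec6 {x0 x1 x2 x3 x4 x5 : ℕ} (h01 : x0 < x1) (h12 : x1 < x2)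
    (h23 : x2 < x3) (h34 : x3 < x4) (h45 : x4 < x5) :
    StrictMono ![x0, x1, x2, x3, x4, x5] := by
  intro x y hxy
  fin_cases x <;> fin_cases y <;>
    simp_all [show ![x0, x1, x2, x3, x4, x5] (5 : Fin 6) = x5 from rfl] <;> omega

/-- Key structural lemma: a sublist of a concatenation of strictly decreasing blocks
admits a monotone assignment of block indices, strictly increasing whenever consecutive
pattern entries increase. -/
private lemma key_blocks (f : ℕ → List ℕ) (hf : ∀ i, (f i).Pairwise (· > ·)) :
    ∀ (n : ℕ) (pat : List ℕ), pat.Sublist ((List.range n).flatMap f) →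
    ∃ j : ℕ → ℕ, (∀ k (h : k < pat.length), j k < n ∧ pat[k] ∈ f (j k)) ∧
      (∀ k (h : k + 1 < pat.length),
        j k ≤ j (k+1) ∧ (pat[k] < pat[k+1] → j k < j (k+1))) := by
  intro n
  induction n with
  | zero =>
    intro pat h
    simp only [List.range_zero, List.flatMap_nil, List.sublist_nil] at h
    subst h
    exact ⟨fun _ => 0, by simp, by simp⟩
  | succ n ih =>
    intro pat h
    rw [List.range_succ, List.flatMap_append] at h
    simp only [List.flatMap_cons, List.flatMap_nil, List.append_nil] at h
    obtain ⟨p, q, rfl, hp, hq⟩ := List.sublist_append_iff.mp h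
    obtain ⟨j, hj1, hj2⟩ := ih p hp
    have hqs : q.Pairwise (· > ·) := List.Pairwise.sublist hq (hf n)
    refine ⟨fun k => if k < p.length then j k else n, ?_, ?_⟩
    · intro k hk
      dsimp only
      by_cases hkp : k < p.length
      · have := hj1 k hkp
        rw [if_pos hkp, List.getElem_append_left hkp]
        exact ⟨Nat.lt_succ_of_lt this.1, this.2⟩
      · push_neg at hkp
        rw [if_neg (by omega), List.getElem_append_right hkp]
        exact ⟨Nat.lt_succ_self n, hq.subset (List.getElem_mem _)⟩
    · intro k hk
      dsimp only
      have hlen : k + 1 < p.length + q.length := by simpa using hk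
      by_cases hk1 : k + 1 < p.length
      · have hk0 : k < p.length := by omega
        have := hj2 k hk1
        rw [if_pos hk0, if_pos hk1, List.getElem_append_left hk0,
          List.getElem_append_left hk1]
        exact this
      · push_neg at hk1
        by_cases hk0 : k < p.length
        · have := (hj1 k hk0).1
          rw [if_pos hk0, if_neg (by omega)]
          exact ⟨le_of_lt this, fun _ => this⟩
        · push_neg at hk0
          rw [if_neg (by omega), if_neg (by omega)]
          refine ⟨le_refl _, fun hlt => absurd hlt ?_⟩
          rw [List.getElem_append_right hk0,
            List.getElem_append_right (by omega : p.length ≤ k + 1)] at hlt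
          have := List.pairwise_iff_getElem.mp hqs (k - p.length) (k + 1 - p.length)
            (by omega) (by omega) (by omega)
          omega

/-- If an ordered graph `G` on `[n]` contains no ordered copy of
`G_0 = ({1,3},{1,5},{2,4},{2,6})`, then the sequence `v = I_1 I_2 ⋯ I_n`, where `I_i` is the
decreasing ordering of the lower neighbourhood of `i`, contains no 8-term alternation
`abababab` with `a ≠ b`. -/
theorem stmt3 (n : ℕ) (G : SimpleGraph ℕ) [DecidableRel G.Adj]
    (hG : ∀ i j, G.Adj i j → i ∈ Finset.Icc 1 n ∧ j ∈ Finset.Icc 1 n)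
    (h0 : ¬ ∃ w : Fin 6 → ℕ, StrictMono w ∧ (∀ i, w i ∈ Finset.Icc 1 n) ∧
      G.Adj (w 0) (w 2) ∧ G.Adj (w 0) (w 4) ∧ G.Adj (w 1) (w 3) ∧ G.Adj (w 1) (w 5))
    (v : List ℕ)
    (hv : v = (List.range n).flatMap fun i =>
      (((Finset.Ico 1 (i + 1)).filter fun j => G.Adj j (i + 1)).sort (· ≤ ·)).reverse) :
    ¬ ∃ a b : ℕ, a ≠ b ∧ [a, b, a, b, a, b, a, b].Sublist v := by
  rintro ⟨a, b, hab, hsub⟩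
  subst hv
  set f : ℕ → List ℕ := fun i =>
    (((Finset.Ico 1 (i + 1)).filter fun j => G.Adj j (i + 1)).sort (· ≤ ·)).reverse with hfdef
  have hmem : ∀ e i, e ∈ f i → G.Adj e (i + 1) ∧ e < i + 1 := by
    intro e i he
    simp only [hfdef, List.mem_reverse, Finset.mem_sort, Finset.mem_filter,
      Finset.mem_Ico] at he
    exact ⟨he.2, he.1.2⟩
  have hsort : ∀ i, (f i).Pairwise (· > ·) := by
    intro i
    have := (Finset.sortedLT_sort ((Finset.Ico 1 (i + 1)).filter fun j => G.Adj j (i + 1))).pairwise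
    simpa [hfdef, List.pairwise_reverse] using this
  obtain ⟨j, h1, h2⟩ := key_blocks f hsort n _ hsub
  have m0 := (h1 0 (by norm_num)).2
  have m1 := (h1 1 (by norm_num)).2
  have m2 := (h1 2 (by norm_num)).2
  have m3 := (h1 3 (by norm_num)).2
  have m5 := (h1 5 (by norm_num)).2
  have m6 := (h1 6 (by norm_num)).2
  have m7 := (h1 7 (by norm_num)).2
  simp only [List.getElem_cons_zero, List.getElem_cons_succ] at m0 m1 m2 m3 m5 m6 m7
  have c0 := h2 0 (by norm_num)
  have c1 := h2 1 (by norm_num)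
  have c2 := h2 2 (by norm_num)
  have c3 := h2 3 (by norm_num)
  have c4 := h2 4 (by norm_num)
  have c5 := h2 5 (by norm_num)
  have c6 := h2 6 (by norm_num)
  simp only [List.getElem_cons_zero, List.getElem_cons_succ, Nat.reduceAdd] at c0 c1 c2 c3 c4 c5 c6
  rcases lt_or_gt_of_ne hab with hlt | hlt
  · -- a < b : vertices a, b, j 2 + 1, j 3 + 1, j 6 + 1, j 7 + 1
    have e01 : j 0 < j 1 := c0.2 hlt
    have e23 : j 2 < j 3 := c2.2 hlt
    have e45 : j 4 < j 5 := c4.2 hlt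
    have e67 : j 6 < j 7 := c6.2 hlt
    have hb : b < j 1 + 1 := (hmem b (j 1) m1).2
    have A2 := (hmem a (j 2) m2).1
    have A6 := (hmem a (j 6) m6).1
    have B3 := (hmem b (j 3) m3).1
    have B7 := (hmem b (j 7) m7).1
    apply h0
    refine ⟨![a, b, j 2 + 1, j 3 + 1, j 6 + 1, j 7 + 1], ?_, ?_, A2, A6, B3, B7⟩
    · exact strictMono_vec6 hlt (by omega) (by omega) (by omega) (by omega)
    · intro i
      fin_cases i <;>
        simp only [Matrix.cons_val_zero, Matrix.cons_val_one, Matrix.head_cons, Fin.mk_one,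
          Matrix.cons_val', Matrix.cons_val_succ, Matrix.empty_val', Matrix.cons_val_fin_one]
      · exact (hG _ _ A2).1
      · exact (hG _ _ B3).1
      · exact (hG _ _ A2).2
      · exact (hG _ _ B3).2
      · exact (hG _ _ A6).2
      · exact (hG _ _ B7).2
  · -- a > b : vertices b, a, j 1 + 1, j 2 + 1, j 5 + 1, j 6 + 1
    have e12 : j 1 < j 2 := c1.2 hlt
    have e34 : j 3 < j 4 := c3.2 hlt
    have e56 : j 5 < j 6 := c5.2 hlt
    have ha : a < j 0 + 1 := (hmem a (j 0) m0).2
    have B1 := (hmem b (j 1) m1).1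
    have B5 := (hmem b (j 5) m5).1
    have A2 := (hmem a (j 2) m2).1
    have A6 := (hmem a (j 6) m6).1
    apply h0
    refine ⟨![b, a, j 1 + 1, j 2 + 1, j 5 + 1, j 6 + 1], ?_, ?_, B1, B5, A2, A6⟩
    · exact strictMono_vec6 hlt (by omega) (by omega) (by omega) (by omega)
    · intro i
      fin_cases i <;>
        simp only [Matrix.cons_val_zero, Matrix.cons_val_one, Matrix.head_cons, Fin.mk_one,
          Matrix.cons_val', Matrix.cons_val_succ, Matrix.empty_val', Matrix.cons_val_fin_one]
      · exact (hG _ _ B1).1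
      · exact (hG _ _ A2).1
      · exact (hG _ _ B1).2
      · exact (hG _ _ A2).2
      · exact (hG _ _ B5).2
      · exact (hG _ _ A6).2
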